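/- Let A ∈ ℝ^{n×n}, C ∈ ℝ^{p×n}, and let W ⊆ ℝⁿ be a subspace with orthogonal complement W^⊥. Then A(W ∩ ker C) ⊆ W if and only if Aᵀ W^⊥ ⊆ W^⊥ + Im Cᵀ. -/

import Mathlib

open Matrix

private lemma inner_euc' (n : ℕ) (u v : EuclideanSpace ℝ (Fin n)) :
    (inner ℝ u v : ℝ) = (u : Fin n → ℝ) ⬝ᵥ (v : Fin n → ℝ) := by
  simp [PiLp.inner_apply, dotProduct, mul_comm]

private lemma adj' (n m : ℕ) (A : Matrix (Fin m) (Fin n) ℝ) (u : Fin n → ℝ) (v : Fin m → ℝ) :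
    (A.mulVec u) ⬝ᵥ v = u ⬝ᵥ (Aᵀ.mulVec v) := by
  rw [dotProduct_comm, dotProduct_mulVec, dotProduct_comm]
  congr 1
  rw [← Matrix.transpose_transpose A, Matrix.vecMul_transpose, Matrix.transpose_transpose]

theorem image_inter_ker_subset_iff_dual (n p : ℕ)
    (A : Matrix (Fin n) (Fin n) ℝ) (C : Matrix (Fin p) (Fin n) ℝ)
    (W : Submodule ℝ (EuclideanSpace ℝ (Fin n))) :
    (∀ x ∈ W, C.mulVec x = 0 → (WithLp.toLp 2 (A.mulVec x) : EuclideanSpace ℝ (Fin n)) ∈ W) ↔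
      (∀ x ∈ Wᗮ, ∃ y : Fin p → ℝ,
        (WithLp.toLp 2 (Aᵀ.mulVec x - Cᵀ.mulVec y) : EuclideanSpace ℝ (Fin n)) ∈ Wᗮ) := by
  set L : (Fin p → ℝ) →ₗ[ℝ] EuclideanSpace ℝ (Fin n) :=
    { toFun := fun y => (WithLp.toLp 2 (Cᵀ.mulVec y) : EuclideanSpace ℝ (Fin n)),
      map_add' := fun a b => by simp [Matrix.mulVec_add]
      map_smul' := fun c a => by simp [Matrix.mulVec_smul] } with hL
  set S : Submodule ℝ (EuclideanSpace ℝ (Fin n)) := Wᗮ ⊔ LinearMap.range L with hS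
  constructor
  · intro h x hx
    have key : ∀ z ∈ Sᗮ, (inner ℝ z (WithLp.toLp 2 (Aᵀ.mulVec x) : EuclideanSpace ℝ (Fin n)) : ℝ) = 0 := by
      intro z hz
      have hzW : z ∈ W := by
        have : z ∈ Wᗮᗮ := Submodule.orthogonal_le le_sup_left hz
        rwa [Submodule.orthogonal_orthogonal] at this
      have hCz : C.mulVec z = 0 := by
        funext j
        have h1 : (L (Pi.single j 1) : EuclideanSpace ℝ (Fin n)) ∈ S :=
          le_sup_right (α := Submodule ℝ (EuclideanSpace ℝ (Fin n)))
            (LinearMap.mem_range_self L (Pi.single j 1))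
        have h2 : (inner ℝ (L (Pi.single j 1)) z : ℝ) = 0 :=
          (Submodule.mem_orthogonal S z).mp hz _ h1
        rw [inner_euc'] at h2
        have h3 : (Cᵀ.mulVec (Pi.single j 1)) ⬝ᵥ z = (C.mulVec z) j := by
          simp [mulVec, dotProduct, Pi.single_apply, Finset.sum_mul, mul_comm]
        simpa [hL, ← h3] using h2
      have hAz : (WithLp.toLp 2 (A.mulVec z) : EuclideanSpace ℝ (Fin n)) ∈ W := h z hzW hCz
      rw [inner_euc', WithLp.ofLp_toLp, ← adj' n n A z x]
      have := (Submodule.mem_orthogonal W x).mp hx _ hAz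
      rwa [inner_euc'] at this
    have hmem : (WithLp.toLp 2 (Aᵀ.mulVec x) : EuclideanSpace ℝ (Fin n)) ∈ Sᗮᗮ :=
      (Submodule.mem_orthogonal Sᗮ _).mpr key
    rw [Submodule.orthogonal_orthogonal, hS, Submodule.mem_sup] at hmem
    obtain ⟨a, ha, b, hb, hab⟩ := hmem
    obtain ⟨y, rfl⟩ := hb
    refine ⟨y, ?_⟩
    have hE : (WithLp.toLp 2 (Aᵀ.mulVec x - Cᵀ.mulVec y) : EuclideanSpace ℝ (Fin n)) = a := by
      have hLy : L y = (WithLp.toLp 2 (Cᵀ.mulVec y) : EuclideanSpace ℝ (Fin n)) := rfl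
      rw [WithLp.toLp_sub, ← hab, ← hLy, add_sub_cancel_right]
    exact hE ▸ ha
  · intro h x hxW hCx
    have key : ∀ w ∈ Wᗮ, (inner ℝ w (WithLp.toLp 2 (A.mulVec x) : EuclideanSpace ℝ (Fin n)) : ℝ) = 0 := by
      intro w hw
      obtain ⟨y, hy⟩ := h w hw
      rw [inner_euc', WithLp.ofLp_toLp]
      have e1 : (w : Fin n → ℝ) ⬝ᵥ (A.mulVec x) = (A.mulVec x) ⬝ᵥ w := dotProduct_comm _ _
      have e2 : (A.mulVec x) ⬝ᵥ w = x ⬝ᵥ (Aᵀ.mulVec w) := adj' n n A x w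
      have e3 : (x : Fin n → ℝ) ⬝ᵥ (Aᵀ.mulVec w) =
          x ⬝ᵥ ((Aᵀ.mulVec w - Cᵀ.mulVec y : Fin n → ℝ)) + x ⬝ᵥ (Cᵀ.mulVec y) := by
        rw [dotProduct_sub]; ring
      have e4 : (x : Fin n → ℝ) ⬝ᵥ ((Aᵀ.mulVec w - Cᵀ.mulVec y : Fin n → ℝ)) = 0 := by
        have := (Submodule.mem_orthogonal W _).mp hy x hxW
        rwa [inner_euc'] at this
      have e5 : (x : Fin n → ℝ) ⬝ᵥ (Cᵀ.mulVec y) = 0 := by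
        rw [← adj' n p C x y, hCx, zero_dotProduct]
      rw [e1, e2, e3, e4, e5, zero_add]
    have hmem : (WithLp.toLp 2 (A.mulVec x) : EuclideanSpace ℝ (Fin n)) ∈ Wᗮᗮ :=
      (Submodule.mem_orthogonal Wᗮ _).mpr key
    rwa [Submodule.orthogonal_orthogonal] at hmem
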